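/- Let W be a Coxeter group with Coxeter element γ, let W' be a standard parabolic subgroup generated by J ⊆ S, and let γ' be the restriction of γ to W' (the subword of γ consisting of letters in J). Then the set of γ'-sortable elements of W' is an order ideal of the poset of γ-sortable elements of W under Bruhat order: if w is γ-sortable, w' is γ'-sortable, and w ≤_B w', then w ∈ W' and w is γ'-sortable. -/

import Mathlib

/-! Sortable elements of a Coxeter group, following Reading.
We fix a rank `n` and a Coxeter system `cs` over the index type `Fin n`; the fixed reduced
word for the Coxeter element `γ` is `s 0 * s 1 * ⋯ * s (n-1)`.  Position `i` (0-based) of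
the half-infinite word `γ^∞ = s 0 ⋯ s (n-1) | s 0 ⋯ s (n-1) | ⋯` carries the letter
`i % n`. -/

variable {n : ℕ} [NeZero n] {W : Type*} [Group W] {M : CoxeterMatrix (Fin n)}

/-- The letter at position `i` of `γ^∞`. -/
def gammaLetter (n : ℕ) [NeZero n] (i : ℕ) : Fin n :=
  ⟨i % n, Nat.mod_lt i (Nat.pos_of_ne_zero (NeZero.ne n))⟩

/-- The subword of `γ^∞` with (finite) set of positions `A`. -/
def subwordOf (n : ℕ) [NeZero n] (A : Finset ℕ) : List (Fin n) :=
  (A.sort (· ≤ ·)).map (gammaLetter n)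

/-- `A` is the set of filled positions `α_γ(w)` of the `γ`-sorting word of `w`: the subword
of `γ^∞` at positions `A` is a reduced word for `w`, and it is lexicographically first among
all subwords of `γ^∞` that are reduced words for `w`. -/
def IsSortingPositions (cs : CoxeterSystem M W) (w : W) (A : Finset ℕ) : Prop :=
  cs.IsReduced (subwordOf n A) ∧ cs.wordProd (subwordOf n A) = w ∧
    ∀ A' : Finset ℕ, cs.IsReduced (subwordOf n A') → cs.wordProd (subwordOf n A') = w →
      ¬ List.Lex (· < ·) (A'.sort (· ≤ ·)) (A.sort (· ≤ ·))

/-- The blocks of the positions `A` are weakly decreasing, i.e. a letter filled in some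
block is also filled in the preceding block. -/
def BlocksDecreasing (n : ℕ) (A : Finset ℕ) : Prop :=
  ∀ p : ℕ, p + n ∈ A → p ∈ A

/-- `w` is `γ`-sortable: the blocks of its `γ`-sorting word are weakly decreasing. -/
def Sortable (cs : CoxeterSystem M W) (w : W) : Prop :=
  ∃ A : Finset ℕ, IsSortingPositions cs w A ∧ BlocksDecreasing n A

/-- Bruhat order: `u ≤_B v` iff some reduced word for `v` has a subword whose product
is `u`. -/
def Bruhat (cs : CoxeterSystem M W) (u v : W) : Prop :=
  ∃ l : List (Fin n), cs.IsReduced l ∧ cs.wordProd l = v ∧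
    ∃ l' : List (Fin n), l'.Sublist l ∧ cs.wordProd l' = u

/-- `w` is `γ'`-sortable for the restriction `γ'` of `γ` to the standard parabolic
subgroup generated by `J`: it is `γ`-sortable with a sorting word using only letters
in `J`. -/
def SortableIn (cs : CoxeterSystem M W) (J : Set (Fin n)) (w : W) : Prop :=
  ∃ A : Finset ℕ, IsSortingPositions cs w A ∧ BlocksDecreasing n A ∧
    ∀ p ∈ A, gammaLetter n p ∈ J

open Real List
set_option linter.unusedSectionVars false

namespace StmtAux

local notation "V" => (Fin n → ℝ)

variable (M) in
/-- The standard bilinear form coefficients. -/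
noncomputable def kf (a b : Fin n) : ℝ :=
  if M.M a b = 0 then -1 else -Real.cos (Real.pi / (M.M a b))

lemma kf_diag (a : Fin n) : kf M a a = 1 := by
  have h1 : M.M a a = 1 := M.diagonal a
  simp [kf, h1]

lemma kf_symm (a b : Fin n) : kf M a b = kf M b a := by
  unfold kf
  rw [M.isSymm.apply b a]

lemma kf_eq (a b : Fin n) (h : M.M a b ≠ 0) :
    kf M a b = -Real.cos (Real.pi / (M.M a b)) := by simp [kf, h]

variable (M) in
/-- The linear functional `⟨e_a, ·⟩`. -/
noncomputable def phi (a : Fin n) (v : V) : ℝ := ∑ b, kf M a b * v b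

lemma phi_single (a b : Fin n) : phi M a (Pi.single b 1) = kf M a b := by
  unfold phi
  rw [Finset.sum_eq_single b]
  · simp
  · intro c _ hc; simp [Pi.single_eq_of_ne hc]
  · simp

lemma phi_add (a : Fin n) (v w : V) : phi M a (v + w) = phi M a v + phi M a w := by
  unfold phi
  rw [← Finset.sum_add_distrib]
  congr 1; funext b; simp; ring

lemma phi_smul (a : Fin n) (r : ℝ) (v : V) : phi M a (r • v) = r * phi M a v := by
  unfold phi
  rw [Finset.mul_sum]
  congr 1; funext b; simp; ring

lemma phi_sub (a : Fin n) (v w : V) : phi M a (v - w) = phi M a v - phi M a w := by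
  unfold phi
  rw [← Finset.sum_sub_distrib]
  congr 1; funext b; simp; ring

variable (M) in
/-- The reflection attached to a simple index. -/
noncomputable def rf (a : Fin n) (v : V) : V := v - (2 * phi M a v) • (Pi.single a 1 : V)

lemma rf_invol (a : Fin n) : Function.Involutive (rf M a) := by
  intro v
  unfold rf
  rw [phi_sub, phi_smul, phi_single, kf_diag]
  ring_nf
  module

end StmtAux

namespace StmtAux

variable (M) in
noncomputable def rfP (a : Fin n) : Equiv.Perm (Fin n → ℝ) :=
  Function.Involutive.toPerm _ (rf_invol (M := M) a)

lemma rfP_apply (a : Fin n) (v : Fin n → ℝ) : rfP M a v = rf M a v := rfl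

/-- One step of the dihedral rotation, on the coordinate plane. -/
def dstep (c : ℝ) (q : ℝ × ℝ) : ℝ × ℝ := ((4*c^2-1)*q.1 - 2*c*q.2, 2*c*q.1 - q.2)

lemma dstep_lin (c r r' : ℝ) (q q' : ℝ × ℝ) :
    dstep c (r • q - r' • q') = r • dstep c q - r' • dstep c q' := by
  unfold dstep
  simp [Prod.smul_mk, Prod.ext_iff]
  constructor <;> ring

lemma dstep_dstep (c : ℝ) (q : ℝ × ℝ) :
    dstep c (dstep c q) = (4*c^2-2) • dstep c q - q := by
  unfold dstep
  simp [Prod.ext_iff]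
  constructor <;> ring

lemma dstep_iterate {m : ℕ} (hm : 2 ≤ m) :
    (dstep (Real.cos (Real.pi / m)))^[m] = id := by
  funext q
  rcases Nat.lt_or_ge m 3 with h3 | h3
  · -- m = 2
    have hm2 : m = 2 := by omega
    subst hm2
    have : (2:ℝ) ≠ 0 := by norm_num
    simp only [Nat.cast_ofNat, Real.cos_pi_div_two]
    simp [dstep, Prod.ext_iff]
  · -- m ≥ 3
    set θ : ℝ := Real.pi / m with hθ
    have hmpos : (0:ℝ) < m := by positivity
    have hθpos : 0 < θ := by positivity
    have h2θ : 2 * θ < Real.pi := by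
      rw [hθ]
      have h2m : (2:ℝ)/m < 1 := by
        rw [div_lt_one (by positivity)]
        exact_mod_cast (by omega : 2 < m)
      have hpi := Real.pi_pos
      rw [show 2*(Real.pi/(m:ℝ)) = Real.pi*(2/(m:ℝ)) by ring]
      nlinarith
    have hsin : Real.sin (2*θ) ≠ 0 :=
      ne_of_gt (Real.sin_pos_of_pos_of_lt_pi (by positivity) h2θ)
    set c : ℝ := Real.cos θ with hc
    -- trace identity
    have htr : 4*c^2 - 2 = 2 * Real.cos (2*θ) := by
      rw [Real.cos_two_mul]; ring
    set p : ℕ → ℝ := fun k => Real.sin (2*k*θ) / Real.sin (2*θ) with hp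
    have hp0 : p 0 = 0 := by simp [hp]
    have hp1 : p 1 = 1 := by
      simp only [hp, Nat.cast_one]
      rw [show 2*(1:ℝ)*θ = 2*θ by ring, div_self hsin]
    have hrec : ∀ k : ℕ, p (k+2) = (4*c^2-2) * p (k+1) - p k := by
      intro k
      have key : Real.sin (2*(k+2)*θ) + Real.sin (2*k*θ)
          = 2 * Real.cos (2*θ) * Real.sin (2*(k+1)*θ) := by
        have e1 : 2*((k:ℝ)+2)*θ = 2*(k+1)*θ + 2*θ := by ring
        have e2 : 2*(k:ℝ)*θ = 2*(k+1)*θ - 2*θ := by ring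
        rw [e1, e2, Real.sin_add, Real.sin_sub]
        ring
      simp only [hp, htr]
      push_cast
      field_simp
      rw [show (2:ℝ)*θ*((k:ℝ)+1) = 2*((k:ℝ)+1)*θ by ring]
      linarith [key]
    have main : ∀ k : ℕ, (dstep c)^[k+1] q = p (k+1) • dstep c q - p k • q := by
      intro k
      induction k with
      | zero => simp [hp0, hp1]
      | succ k ih =>
        rw [Function.iterate_succ_apply', ih, dstep_lin, dstep_dstep, hrec k]
        module
    have hm1 : m - 1 + 1 = m := by omega
    have hfin := main (m - 1)
    rw [hm1] at hfin
    have hpm : p m = 0 := by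
      simp only [hp]
      have : 2*(m:ℝ)*θ = 2*Real.pi := by
        rw [hθ]; field_simp
      rw [this, Real.sin_two_pi, zero_div]
    have hpm1 : p (m-1) = -1 := by
      simp only [hp]
      have hcast : ((m-1 : ℕ) : ℝ) = (m:ℝ) - 1 := by
        have : (1:ℕ) ≤ m := by omega
        push_cast [this]; ring
      rw [hcast]
      have : 2*((m:ℝ)-1)*θ = 2*Real.pi - 2*θ := by
        rw [hθ]; field_simp
      rw [this, Real.sin_two_pi_sub]
      field_simp
    rw [hfin, hpm, hpm1]
    simp

end StmtAux

namespace StmtAux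

variable {a b : Fin n}

lemma rf_plane_a (hab : a ≠ b) (c : ℝ) (hc : kf M a b = -c) (x y : ℝ) (r : Fin n → ℝ)
    (hra : phi M a r = 0) :
    rf M a (x • (Pi.single a 1 : Fin n → ℝ) + y • (Pi.single b 1 : Fin n → ℝ) + r)
      = (-x + 2*c*y) • (Pi.single a 1 : Fin n → ℝ)
        + y • (Pi.single b 1 : Fin n → ℝ) + r := by
  unfold rf
  rw [phi_add, phi_add, phi_smul, phi_smul, phi_single, phi_single, kf_diag, hc, hra]
  match_scalars <;> ring

lemma rf_plane_b (hab : a ≠ b) (c : ℝ) (hc : kf M a b = -c) (x y : ℝ) (r : Fin n → ℝ)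
    (hrb : phi M b r = 0) :
    rf M b (x • (Pi.single a 1 : Fin n → ℝ) + y • (Pi.single b 1 : Fin n → ℝ) + r)
      = x • (Pi.single a 1 : Fin n → ℝ)
        + (2*c*x - y) • (Pi.single b 1 : Fin n → ℝ) + r := by
  unfold rf
  rw [phi_add, phi_add, phi_smul, phi_smul, phi_single, phi_single, kf_diag,
    kf_symm b a, hc, hrb]
  match_scalars <;> ring

lemma rfP_pair_pow (hab : a ≠ b) (c : ℝ) (hc : kf M a b = -c) (r : Fin n → ℝ)
    (hra : phi M a r = 0) (hrb : phi M b r = 0) (k : ℕ) (x y : ℝ) :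
    ((rfP M a * rfP M b)^k) (x • (Pi.single a 1 : Fin n → ℝ)
        + y • (Pi.single b 1 : Fin n → ℝ) + r)
      = ((dstep c)^[k] (x, y)).1 • (Pi.single a 1 : Fin n → ℝ)
        + ((dstep c)^[k] (x, y)).2 • (Pi.single b 1 : Fin n → ℝ) + r := by
  induction k generalizing x y with
  | zero => simp
  | succ k ih =>
    rw [pow_succ, Equiv.Perm.mul_apply, Equiv.Perm.mul_apply, rfP_apply, rfP_apply,
      rf_plane_b hab c hc x y r hrb, rf_plane_a hab c hc _ _ r hra, ih,
      Function.iterate_succ_apply]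
    have e : dstep c (x, y) = (-x + 2*c*(2*c*x - y), 2*c*x - y) := by
      unfold dstep
      rw [Prod.mk.injEq]
      exact ⟨by ring, by ring⟩
    rw [e]

lemma rfP_liftable : M.IsLiftable (rfP M) := by
  intro a b
  rcases eq_or_ne a b with rfl | hab
  · rw [M.diagonal a, pow_one]
    ext v
    simp [Equiv.Perm.mul_apply, rfP_apply, rf_invol (M := M) a v]
  · rcases Nat.eq_zero_or_pos (M.M a b) with h0 | hpos
    · rw [h0, pow_zero]
    · have hm : 2 ≤ M.M a b := by
        have := M.off_diagonal a b hab
        omega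
      set m := M.M a b with hmdef
      set c : ℝ := Real.cos (Real.pi / m) with hcdef
      have hc : kf M a b = -c := by rw [kf_eq a b (by omega)]
      refine Equiv.ext fun v => ?_
      -- decompose v
      have hd : Real.sin (Real.pi / m) ≠ 0 := by
        have hmpos : (0:ℝ) < m := by positivity
        have h1 : 0 < Real.pi / m := by positivity
        have h2 : Real.pi / m < Real.pi := by
          rw [div_lt_iff₀ hmpos]
          have hpi := Real.pi_pos
          have : (1:ℝ) < m := by exact_mod_cast (by omega : 1 < m)
          nlinarith
        exact ne_of_gt (Real.sin_pos_of_pos_of_lt_pi h1 h2)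
      have hdne : 1 - c^2 ≠ 0 := by
        have : 1 - c^2 = (Real.sin (Real.pi / m))^2 := by
          rw [hcdef, Real.sin_sq]
        rw [this]
        positivity
      set α := phi M a v with hα
      set β := phi M b v with hβ
      set x := (α + c*β)/(1-c^2) with hx
      set y := (β + c*α)/(1-c^2) with hy
      set r := v - x • (Pi.single a 1 : Fin n → ℝ) - y • (Pi.single b 1 : Fin n → ℝ)
        with hr
      have hra : phi M a r = 0 := by
        rw [hr, phi_sub, phi_sub, phi_smul, phi_smul, phi_single, phi_single,
          kf_diag, hc, hx, hy]
        field_simp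
        ring
      have hrb : phi M b r = 0 := by
        rw [hr, phi_sub, phi_sub, phi_smul, phi_smul, phi_single, phi_single,
          kf_diag, kf_symm b a, hc, hx, hy]
        field_simp
        ring
      have hv : v = x • (Pi.single a 1 : Fin n → ℝ)
          + y • (Pi.single b 1 : Fin n → ℝ) + r := by
        rw [hr]; abel
      rw [Equiv.Perm.one_apply]
      nth_rw 1 [hv]
      rw [rfP_pair_pow hab c hc r hra hrb m x y, dstep_iterate hm]
      simp only [id_eq]
      exact hv.symm

variable (cs : CoxeterSystem M W)

/-- Injectivity of the simple reflections. -/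
theorem simple_injective : Function.Injective cs.simple := by
  intro i j hij
  by_contra hne
  have h := congrArg (cs.lift ⟨rfP M, rfP_liftable⟩) hij
  rw [CoxeterSystem.lift_apply_simple, CoxeterSystem.lift_apply_simple] at h
  have h2 := congrFun (congrArg (fun (f : Equiv.Perm (Fin n → ℝ)) =>
    f (Pi.single i 1)) h) i
  simp only [rfP_apply, rf] at h2
  rw [phi_single, phi_single, kf_diag] at h2
  have hji : (Pi.single j 1 : Fin n → ℝ) i = 0 := Pi.single_eq_of_ne hne 1
  have hii : (Pi.single i 1 : Fin n → ℝ) i = 1 := Pi.single_eq_same i 1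
  simp only [Pi.sub_apply, Pi.smul_apply, hii, hji, smul_eq_mul] at h2
  norm_num at h2

end StmtAux

namespace StmtAux

open CoxeterSystem

variable (cs : CoxeterSystem M W)

local prefix:100 "s" => cs.simple
local prefix:100 "π" => cs.wordProd
local prefix:100 "ℓ" => cs.length

/-- Indicator function with classical decidability. -/
noncomputable def ind (x y : W) : ZMod 2 := by
  classical exact if x = y then 1 else 0

lemma ind_congr {x y x' y' : W} (h : x = y ↔ x' = y') : ind x y = ind x' y' := by
  unfold ind
  split_ifs with h1 h2 h2
  · rfl
  · exact absurd (h.mp h1) h2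
  · exact absurd (h.mpr h2) h1
  · rfl

lemma ind_of_eq {x y : W} (h : x = y) : ind x y = 1 := by simp [ind, h]

lemma ind_of_ne {x y : W} (h : x ≠ y) : ind x y = 0 := by simp [ind, h]

/-- Number of occurrences (mod 2) of `t` in a list. -/
noncomputable def cnt (t : W) (L : List W) : ZMod 2 := (L.map (ind t)).sum

@[simp] lemma cnt_nil (t : W) : cnt t [] = 0 := rfl

lemma cnt_cons (t x : W) (L : List W) : cnt t (x :: L) = ind t x + cnt t L := by
  unfold cnt
  simp [add_comm]

lemma cnt_append (t : W) (L L' : List W) : cnt t (L ++ L') = cnt t L + cnt t L' := by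
  unfold cnt
  simp

lemma cnt_reverse (t : W) (L : List W) : cnt t L.reverse = cnt t L := by
  unfold cnt
  rw [List.map_reverse, List.sum_reverse]

lemma cnt_map_conj (t g : W) (L : List W) :
    cnt t (L.map (fun x => g⁻¹ * x * g)) = cnt (g * t * g⁻¹) L := by
  unfold cnt
  rw [List.map_map]
  congr 1
  apply List.map_congr_left
  intro x _
  apply ind_congr
  constructor
  · intro h; rw [h]; group
  · intro h; rw [← h]; group

lemma cnt_map_conj' (t g : W) (L : List W) :
    cnt t (L.map (fun x => g * x * g⁻¹)) = cnt (g⁻¹ * t * g) L := by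
  have := cnt_map_conj t g⁻¹ L
  simpa using this

lemma cnt_eq_zero_of_not_mem {t : W} {L : List W} (h : t ∉ L) : cnt t L = 0 := by
  induction L with
  | nil => rfl
  | cons x L ih =>
    rw [cnt_cons, ind_of_ne (by simp at h; exact h.1), ih (by simp at h; exact h.2)]
    simp

lemma cnt_eq_one_of_nodup {t : W} {L : List W} (hd : L.Nodup) (h : t ∈ L) :
    cnt t L = 1 := by
  induction L with
  | nil => simp at h
  | cons x L ih =>
    rw [cnt_cons]
    rcases List.mem_cons.mp h with rfl | hmem
    · rw [ind_of_eq rfl, cnt_eq_zero_of_not_mem (List.nodup_cons.mp hd).1]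
      simp
    · rw [ind_of_ne (by rintro rfl; exact (List.nodup_cons.mp hd).1 hmem),
        ih (List.nodup_cons.mp hd).2 hmem]
      simp

/-- The parity permutation attached to a simple index. -/
noncomputable def tauf (i : Fin n) : W × ZMod 2 → W × ZMod 2 :=
  fun q => (s i * q.1 * s i, q.2 + ind q.1 (s i))

lemma tauf_invol (i : Fin n) : Function.Involutive (tauf cs i) := by
  intro q
  unfold tauf
  have h1 : s i * (s i * q.1 * s i) * s i = q.1 := by
    rw [← mul_assoc, ← mul_assoc, cs.simple_mul_simple_self]
    simp [mul_assoc, cs.simple_mul_simple_self]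
  have h2 : ind (s i * q.1 * s i) (s i) = ind q.1 (s i) := by
    apply ind_congr
    constructor
    · intro h
      calc q.1 = s i * (s i * q.1 * s i) * s i := h1.symm
        _ = s i * s i * s i := by rw [h]
        _ = s i := by rw [cs.simple_mul_simple_self, one_mul]
    · intro h; rw [h]; simp
  rw [h1, h2, add_assoc, CharTwo.add_self_eq_zero, add_zero]

noncomputable def tau (i : Fin n) : Equiv.Perm (W × ZMod 2) :=
  Function.Involutive.toPerm (tauf cs i) (tauf_invol cs i)

lemma tau_apply (i : Fin n) (q : W × ZMod 2) : tau cs i q = tauf cs i q := rfl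

end StmtAux

namespace StmtAux

open CoxeterSystem

variable (cs : CoxeterSystem M W)

local prefix:100 "s" => cs.simple
local prefix:100 "π" => cs.wordProd
local prefix:100 "ℓ" => cs.length

lemma inv_pair (a b : Fin n) : (s a * s b)⁻¹ = s b * s a := by
  rw [mul_inv_rev, cs.inv_simple, cs.inv_simple]

lemma sb_pow (a b : Fin n) (k : ℕ) :
    s b * (s a * s b)^k = ((s a * s b)⁻¹)^k * s b := by
  induction k with
  | zero => simp
  | succ k ih =>
    rw [pow_succ, ← mul_assoc, ih, pow_succ (((s a * s b)⁻¹)) k, mul_assoc, mul_assoc]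
    congr 1
    rw [inv_pair]
    simp [mul_assoc]

lemma conj_eq_iff (g u v : W) : g * u * g⁻¹ = v ↔ u = g⁻¹ * v * g := by
  constructor
  · intro h; rw [← h]; group
  · intro h; rw [h]; group

lemma shift_pow (a b : Fin n) (k : ℕ) :
    ((s a * s b)^k)⁻¹ * s b * (s a * s b)^k = ((s a * s b)⁻¹)^(2*k) * s b := by
  rw [mul_assoc, sb_pow, ← mul_assoc, ← inv_pow, ← pow_add]
  congr 2
  omega

lemma shift_pow' (a b : Fin n) (k : ℕ) :
    ((s a * s b)^k)⁻¹ * (s b * s a * s b) * (s a * s b)^k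
      = ((s a * s b)⁻¹)^(2*k+1) * s b := by
  have h1 : s b * s a * s b = (s a * s b)⁻¹ * s b := by
    rw [inv_pair]
  rw [h1, ← mul_assoc]
  rw [show (((s a * s b)^k)⁻¹ * (s a * s b)⁻¹) = ((s a * s b)^(k+1))⁻¹ by
    rw [← mul_inv_rev, ← pow_succ']]
  rw [mul_assoc, sb_pow, ← mul_assoc, ← inv_pow, ← pow_add]
  congr 2
  omega

lemma tau_pair_pow (a b : Fin n) (k : ℕ) (t : W) (ε : ZMod 2) :
    ((tau cs a * tau cs b)^k) (t, ε) =
      ((s a * s b)^k * t * ((s a * s b)^k)⁻¹,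
        ε + ∑ l ∈ Finset.range (2*k), ind t (((s a * s b)⁻¹)^l * s b)) := by
  induction k with
  | zero => simp
  | succ k ih =>
    rw [pow_succ', Equiv.Perm.mul_apply, ih, Equiv.Perm.mul_apply]
    rw [tau_apply, tau_apply]
    unfold tauf
    simp only
    congr 1
    · -- group part
      have hR : (s a * s b)^(k+1) * t * ((s a * s b)^(k+1))⁻¹
          = (s a * s b) * ((s a * s b)^k * t * ((s a * s b)^k)⁻¹) * (s b * s a) := by
        rw [pow_succ' (s a * s b) k, mul_inv_rev (s a * s b), inv_pair]
        simp [mul_assoc]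
      rw [hR]
      simp [mul_assoc]
    · -- parity part
      have e1 : ind ((s a * s b)^k * t * ((s a * s b)^k)⁻¹) (s b)
          = ind t (((s a * s b)⁻¹)^(2*k) * s b) := by
        apply ind_congr
        rw [conj_eq_iff, shift_pow]
      have e2 : ind (s b * ((s a * s b)^k * t * ((s a * s b)^k)⁻¹) * s b) (s a)
          = ind t (((s a * s b)⁻¹)^(2*k+1) * s b) := by
        apply ind_congr
        have hiff : ∀ u : W, s b * u * s b = s a ↔ u = s b * s a * s b := by
          intro u
          constructor
          · intro h
            calc u = s b * (s b * u * s b) * s b := by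
                  rw [← mul_assoc, ← mul_assoc, cs.simple_mul_simple_self, one_mul,
                    mul_assoc, cs.simple_mul_simple_self, mul_one]
              _ = s b * s a * s b := by rw [h]
          · intro h
            rw [h, ← mul_assoc, ← mul_assoc, cs.simple_mul_simple_self, one_mul,
              mul_assoc, cs.simple_mul_simple_self, mul_one]
        rw [hiff, conj_eq_iff, shift_pow']
      rw [e1, e2]
      rw [show 2*(k+1) = (2*k+1)+1 by omega, Finset.sum_range_succ, Finset.sum_range_succ]
      push_cast
      ring

lemma tau_liftable : M.IsLiftable (tau cs) := by
  intro a b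
  rcases eq_or_ne a b with rfl | hab
  · rw [M.diagonal a, pow_one]
    refine Equiv.ext fun q => ?_
    exact tauf_invol cs a q
  · refine Equiv.ext fun q => ?_
    obtain ⟨t, ε⟩ := q
    rw [tau_pair_pow]
    have hpow : (s a * s b)^(M.M a b) = 1 := cs.simple_mul_simple_pow a b
    have hqpow : ((s a * s b)⁻¹)^(M.M a b) = 1 := by
      rw [inv_pow, hpow, inv_one]
    have hsum : ∑ l ∈ Finset.range (2*(M.M a b)),
        ind t (((s a * s b)⁻¹)^l * s b) = 0 := by
      have hsplit : ∀ l, ((s a * s b)⁻¹)^(l + M.M a b) = ((s a * s b)⁻¹)^l := by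
        intro l
        rw [pow_add, hqpow, mul_one]
      rw [two_mul, Finset.sum_range_add]
      have : ∀ l, ind t (((s a * s b)⁻¹)^(M.M a b + l) * s b)
          = ind t (((s a * s b)⁻¹)^l * s b) := by
        intro l
        rw [Nat.add_comm, hsplit]
      rw [Finset.sum_congr rfl (fun l _ => this l)]
      exact CharTwo.add_self_eq_zero _
    rw [hpow, hsum]
    simp

end StmtAux

namespace StmtAux

open CoxeterSystem

variable (cs : CoxeterSystem M W)

local prefix:100 "s" => cs.simple
local prefix:100 "π" => cs.wordProd
local prefix:100 "ℓ" => cs.length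
local prefix:100 "ris" => cs.rightInvSeq
local prefix:100 "lis" => cs.leftInvSeq

noncomputable def etaHom : W →* Equiv.Perm (W × ZMod 2) :=
  cs.lift ⟨tau cs, tau_liftable cs⟩

noncomputable def eta (w t : W) : ZMod 2 := ((etaHom cs) w (t, 0)).2

lemma ris_cons (i : Fin n) (ω : List (Fin n)) :
    ris (i :: ω) = ((π ω)⁻¹ * (s i) * (π ω)) :: ris ω := rfl

lemma etaHom_wordProd (ω : List (Fin n)) (t : W) (ε : ZMod 2) :
    (etaHom cs (π ω)) (t, ε) = ((π ω) * t * (π ω)⁻¹, ε + cnt t (ris ω)) := by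
  induction ω generalizing ε with
  | nil => simp [cs.wordProd_nil]
  | cons i ω ih =>
    rw [cs.wordProd_cons, map_mul, Equiv.Perm.mul_apply, ih]
    have : etaHom cs (s i) = tau cs i := by
      unfold etaHom
      exact cs.lift_apply_simple (tau_liftable cs) i
    rw [this, tau_apply]
    unfold tauf
    simp only
    rw [ris_cons, cnt_cons]
    have hfst : s i * ((π ω) * t * (π ω)⁻¹) * s i
        = s i * (π ω) * t * (s i * (π ω))⁻¹ := by
      rw [mul_inv_rev, cs.inv_simple]
      simp [mul_assoc]
    have hsnd : ind ((π ω) * t * (π ω)⁻¹) (s i) = ind t ((π ω)⁻¹ * s i * (π ω)) := by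
      apply ind_congr
      rw [conj_eq_iff]
    rw [hfst, hsnd]
    rw [Prod.mk.injEq]
    exact ⟨rfl, by ring⟩

end StmtAux

namespace StmtAux

open CoxeterSystem

variable (cs : CoxeterSystem M W)

local prefix:100 "s" => cs.simple
local prefix:100 "π" => cs.wordProd
local prefix:100 "ℓ" => cs.length
local prefix:100 "ris" => cs.rightInvSeq
local prefix:100 "lis" => cs.leftInvSeq

/-- The parity of the number of occurrences of `t` in the right inversion sequence
depends only on the product of the word. -/
lemma cnt_ris_eq_eta (ω : List (Fin n)) (t : W) : cnt t (ris ω) = eta cs (π ω) t := by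
  unfold eta
  rw [etaHom_wordProd]
  simp

lemma ris_append (ω ω' : List (Fin n)) :
    ris (ω ++ ω') = (ris ω).map (fun x => (π ω')⁻¹ * x * (π ω')) ++ ris ω' := by
  induction ω with
  | nil => simp
  | cons i ω ih =>
    rw [List.cons_append, ris_cons, ris_cons, ih, List.map_cons, List.cons_append]
    congr 1
    rw [cs.wordProd_append, mul_inv_rev]
    group

lemma lis_eq_map (ω : List (Fin n)) :
    lis ω = (ris ω).map (fun x => (π ω) * x * (π ω)⁻¹) := by
  induction ω with
  | nil => simp
  | cons i ω ih =>
    have hl : lis (i :: ω) = s i :: List.map (⇑(MulAut.conj (s i))) (lis ω) := rfl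
    rw [hl, ris_cons, List.map_cons, ih, List.map_map]
    congr 1
    · rw [cs.wordProd_cons, mul_inv_rev, cs.inv_simple]
      simp [mul_assoc, cs.simple_mul_simple_cancel_left]
    · apply List.map_congr_left
      intro x _
      simp only [Function.comp_apply, MulAut.conj_apply, cs.wordProd_cons, mul_inv_rev,
        cs.inv_simple]
      group

end StmtAux

namespace StmtAux

open CoxeterSystem

variable (cs : CoxeterSystem M W)

local prefix:100 "s" => cs.simple
local prefix:100 "π" => cs.wordProd
local prefix:100 "ℓ" => cs.length
local prefix:100 "ris" => cs.rightInvSeq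
local prefix:100 "lis" => cs.leftInvSeq

/-- `η(t, t) = 1` for any reflection `t`. -/
lemma eta_self_eq_one {t : W} (ht : cs.IsReflection t) : eta cs t t = 1 := by
  obtain ⟨v, i, rfl⟩ := ht
  obtain ⟨ν, _, hν⟩ := cs.exists_reduced_word' v
  set t := v * s i * v⁻¹ with hts
  have hword : π (ν ++ ([i] ++ ν.reverse)) = t := by
    rw [cs.wordProd_append, cs.wordProd_append, cs.wordProd_reverse, cs.wordProd_singleton,
      hts, hν, mul_assoc]
  have hbridge := cnt_ris_eq_eta cs (ν ++ ([i] ++ ν.reverse)) t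
  rw [hword] at hbridge
  rw [← hbridge]
  rw [ris_append, ris_append, cnt_append, cnt_append]
  -- the three pieces
  have hπ : π ([i] ++ ν.reverse) = s i * v⁻¹ := by
    rw [cs.wordProd_append, cs.wordProd_reverse, cs.wordProd_singleton, hν]
  -- first piece
  have h1 : cnt t ((ris ν).map (fun x => (π ([i] ++ ν.reverse))⁻¹ * x * (π ([i] ++ ν.reverse))))
      = cnt (s i) (ris ν) := by
    rw [cnt_map_conj]
    congr 1
    rw [hπ, hts, hν]
    rw [mul_inv_rev, cs.inv_simple]
    simp [mul_assoc, cs.simple_mul_simple_cancel_left]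
  -- second piece : ris [i] mapped
  have h2 : cnt t ((ris [i]).map (fun x => (π ν.reverse)⁻¹ * x * (π ν.reverse))) = 1 := by
    rw [cs.rightInvSeq_singleton]
    show cnt t [(π ν.reverse)⁻¹ * s i * (π ν.reverse)] = 1
    rw [show (π ν.reverse)⁻¹ * s i * (π ν.reverse) = t by
      rw [cs.wordProd_reverse, inv_inv, ← hν]]
    unfold cnt
    simp [ind_of_eq rfl]
  -- third piece
  have h3 : cnt t (ris ν.reverse) = cnt (s i) (ris ν) := by
    rw [cs.rightInvSeq_reverse, cnt_reverse, lis_eq_map, cnt_map_conj']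
    congr 1
    rw [← hν, hts]
    simp [mul_assoc]
  rw [h1, h2, h3]
  have : ∀ x : ZMod 2, x + (1 + x) = 1 := by decide
  exact this _

end StmtAux

namespace StmtAux

open CoxeterSystem

variable (cs : CoxeterSystem M W)

local prefix:100 "s" => cs.simple
local prefix:100 "π" => cs.wordProd
local prefix:100 "ℓ" => cs.length
local prefix:100 "ris" => cs.rightInvSeq
local prefix:100 "lis" => cs.leftInvSeq

lemma eta_mul_reflection {t : W} (ht : cs.IsReflection t) (w : W) :
    eta cs (w * t) t = eta cs w t + 1 := by
  obtain ⟨ω, _, hω⟩ := cs.exists_reduced_word' w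
  obtain ⟨ωt, _, hωt⟩ := cs.exists_reduced_word' t
  have h1 : π (ω ++ ωt) = w * t := by rw [cs.wordProd_append, ← hω, ← hωt]
  have h2 := cnt_ris_eq_eta cs (ω ++ ωt) t
  rw [h1] at h2
  rw [← h2, ris_append, cnt_append, cnt_map_conj]
  have e : π ωt * t * (π ωt)⁻¹ = t := by
    rw [← hωt, ht.mul_self, one_mul, ht.inv]
  rw [e, cnt_ris_eq_eta, cnt_ris_eq_eta, ← hω, ← hωt, eta_self_eq_one cs ht]

/-- Strong exchange property (right version). -/
lemma strong_exchange {w t : W} (ht : cs.IsReflection t) (hlen : ℓ (w * t) < ℓ w)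
    {ω : List (Fin n)} (hred : cs.IsReduced ω) (hω : π ω = w) : t ∈ ris ω := by
  by_contra hmem
  have h0 : eta cs w t = 0 := by
    rw [← hω, ← cnt_ris_eq_eta]
    exact cnt_eq_zero_of_not_mem hmem
  have h1 : eta cs (w * t) t = 1 := by rw [eta_mul_reflection cs ht, h0, zero_add]
  obtain ⟨ω', hred', hω'⟩ := cs.exists_reduced_word' (w * t)
  have h2 : cnt t (ris ω') = 1 := by rw [cnt_ris_eq_eta, ← hω', h1]
  have h3 : t ∈ ris ω' := by
    by_contra h
    rw [cnt_eq_zero_of_not_mem h] at h2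
    exact zero_ne_one h2
  have h4 := cs.isRightInversion_of_mem_rightInvSeq hred' h3
  rw [← hω'] at h4
  have h5 : ℓ (w * t * t) < ℓ (w * t) := h4.2
  rw [mul_assoc, ht.mul_self, mul_one] at h5
  omega

/-- Strong exchange property (left version), with an index. -/
lemma strong_exchange_left {w t : W} (ht : cs.IsReflection t) (hlen : ℓ (t * w) < ℓ w)
    {ω : List (Fin n)} (hred : cs.IsReduced ω) (hω : π ω = w) :
    ∃ j < ω.length, t * w = π (ω.eraseIdx j) := by
  have hinv : ℓ (w⁻¹ * t) < ℓ w⁻¹ := by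
    rw [cs.length_inv]
    calc ℓ (w⁻¹ * t) = ℓ ((w⁻¹ * t)⁻¹) := (cs.length_inv _).symm
      _ = ℓ (t * w) := by rw [mul_inv_rev, inv_inv, ht.inv]
      _ < ℓ w := hlen
  have hredrev : cs.IsReduced ω.reverse := (cs.isReduced_reverse_iff ω).mpr hred
  have hωrev : π ω.reverse = w⁻¹ := by rw [cs.wordProd_reverse, hω]
  have hmem := strong_exchange cs ht hinv hredrev hωrev
  rw [cs.rightInvSeq_reverse, List.mem_reverse] at hmem
  obtain ⟨⟨j, hj⟩, hjt⟩ := List.get_of_mem hmem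
  rw [cs.length_leftInvSeq] at hj
  refine ⟨j, hj, ?_⟩
  have hgetD : (lis ω).getD j 1 = t := by
    rw [List.getD_eq_getElem?_getD, List.getElem?_eq_getElem (by
      rw [cs.length_leftInvSeq]; exact hj)]
    simpa using hjt
  rw [← hgetD, ← hω]
  exact cs.getD_leftInvSeq_mul_wordProd ω j

/-- Every word has a reduced sublist with the same product. -/
lemma exists_reduced_sublist (κ : List (Fin n)) :
    ∃ κ' : List (Fin n), κ'.Sublist κ ∧ π κ' = π κ ∧ cs.IsReduced κ' := by
  generalize hlen : κ.length = N
  induction N using Nat.strong_induction_on generalizing κ with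
  | _ N IH =>
  subst hlen
  by_cases hred : cs.IsReduced κ
  · exact ⟨κ, List.Sublist.refl κ, rfl, hred⟩
  · -- find minimal non-reduced prefix
    have hκne : κ ≠ [] := by
      rintro rfl
      exact hred (by simp [CoxeterSystem.IsReduced])
    have hwit : ¬ cs.IsReduced (κ.take (κ.length - 1 + 1)) := by
      rw [Nat.sub_add_cancel (by
        cases κ with
        | nil => exact absurd rfl hκne
        | cons a l => simp), List.take_length]
      exact hred
    set P : ℕ → Prop := fun k => ¬ cs.IsReduced (κ.take (k + 1)) with hP
    have hPdec : DecidablePred P := fun _ => Classical.dec _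
    have hex : ∃ k, P k := ⟨κ.length - 1, hwit⟩
    set k := Nat.find hex with hk
    have hPk : P k := Nat.find_spec hex
    have hmin : ∀ l, l < k → ¬ P l := fun l hl => Nat.find_min hex hl
    have hkbound : k ≤ κ.length - 1 := Nat.find_le hwit
    have hklt : k < κ.length := by
      have : 1 ≤ κ.length := by
        cases κ with
        | nil => exact absurd rfl hκne
        | cons a l => simp
      omega
    have hredk : cs.IsReduced (κ.take k) := by
      rcases Nat.eq_zero_or_pos k with hk0 | hpos
      · rw [hk0]
        simp [CoxeterSystem.IsReduced]
      · have := hmin (k - 1) (by omega)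
        rw [hP] at this
        simp only [not_not] at this
        rwa [Nat.sub_add_cancel hpos] at this
    -- the letter at position k
    set i : Fin n := κ.get ⟨k, hklt⟩ with hidef
    have htake1 : κ.take (k+1) = κ.take k ++ [i] := by
      rw [List.take_succ, List.getElem?_eq_getElem hklt]
      rfl
    have hlenk : (κ.take k).length = k := by
      rw [List.length_take]
      omega
    have hlu : ℓ (π κ.take k) = k := by
      have := hredk
      unfold CoxeterSystem.IsReduced at this
      rw [this, hlenk]
    have hπk1 : π (κ.take (k+1)) = π (κ.take k) * s i := by
      rw [htake1, cs.wordProd_append, cs.wordProd_singleton]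
    have hnotred : ℓ (π (κ.take k) * s i) ≠ k + 1 := by
      intro h
      apply hPk
      show cs.IsReduced (κ.take (k+1))
      unfold CoxeterSystem.IsReduced
      rw [hπk1, h, List.length_take]
      omega
    have hdesc : ℓ (π (κ.take k) * s i) < ℓ (π κ.take k) := by
      rcases cs.length_mul_simple (π (κ.take k)) i with h | h
      · rw [hlu] at h
        exact absurd h hnotred
      · omega
    have hmem := strong_exchange cs (cs.isReflection_simple i) hdesc hredk rfl
    obtain ⟨⟨j, hjlen⟩, hjt⟩ := List.get_of_mem hmem
    have hjk : j < k := by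
      rw [cs.length_rightInvSeq, hlenk] at hjlen
      exact hjlen
    have hgetD : (ris (κ.take k)).getD j 1 = s i := by
      rw [List.getD_eq_getElem?_getD, List.getElem?_eq_getElem (by
        rw [cs.length_rightInvSeq, hlenk]; exact hjk)]
      simpa using hjt
    have herase : π (κ.take k) * s i = π ((κ.take k).eraseIdx j) := by
      rw [← hgetD]
      exact cs.wordProd_mul_getD_rightInvSeq (κ.take k) j
    set κ' : List (Fin n) := (κ.take k).eraseIdx j ++ κ.drop (k+1) with hκ'def
    have hπκ' : π κ' = π κ := by
      rw [hκ'def, cs.wordProd_append, ← herase, ← hπk1, ← cs.wordProd_append,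
        List.take_append_drop]
    have hsubκ' : κ'.Sublist κ := by
      have h1 : ((κ.take k).eraseIdx j).Sublist (κ.take k) := List.eraseIdx_sublist _ j
      have h2 : (κ.take k).Sublist (κ.take (k+1)) := by
        have : κ.take k = (κ.take (k+1)).take k := by
          rw [List.take_take]
          congr 1
          omega
        rw [this]
        exact (List.take_prefix k (κ.take (k+1))).sublist
      have h3 := (h1.trans h2).append_right (κ.drop (k+1))
      rw [List.take_append_drop] at h3
      exact h3
    have hlenκ' : κ'.length < κ.length := by
      rw [hκ'def, List.length_append, List.length_eraseIdx, List.length_drop, hlenk,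
        if_pos hjk]
      omega
    obtain ⟨κ'', hsub'', hprod'', hred''⟩ := IH κ'.length hlenκ' κ' rfl
    exact ⟨κ'', hsub''.trans hsubκ', by rw [hprod'', hπκ'], hred''⟩

end StmtAux

namespace StmtAux

open CoxeterSystem

variable (cs : CoxeterSystem M W)

local prefix:100 "s" => cs.simple
local prefix:100 "π" => cs.wordProd
local prefix:100 "ℓ" => cs.length

/-- Elements of the standard parabolic subgroup are products of `J`-words. -/
lemma closure_to_word (J : Set (Fin n)) {w : W}
    (hw : w ∈ Subgroup.closure (cs.simple '' J)) :
    ∃ κ : List (Fin n), (∀ x ∈ κ, x ∈ J) ∧ π κ = w := by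
  induction hw using Subgroup.closure_induction with
  | mem x hx =>
    obtain ⟨j, hj, rfl⟩ := hx
    exact ⟨[j], by simpa using hj, cs.wordProd_singleton j⟩
  | one => exact ⟨[], by simp, cs.wordProd_nil⟩
  | mul x y _ _ ihx ihy =>
    obtain ⟨κ₁, h₁, hπ₁⟩ := ihx
    obtain ⟨κ₂, h₂, hπ₂⟩ := ihy
    refine ⟨κ₁ ++ κ₂, ?_, by rw [cs.wordProd_append, hπ₁, hπ₂]⟩
    intro x hx
    rcases List.mem_append.mp hx with h | h
    · exact h₁ x h
    · exact h₂ x h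
  | inv x _ ihx =>
    obtain ⟨κ, h, hπ⟩ := ihx
    refine ⟨κ.reverse, ?_, by rw [cs.wordProd_reverse, hπ]⟩
    intro x hx
    exact h x (List.mem_reverse.mp hx)

/-- If a `J`-word multiplies to a simple reflection, its index lies in `J`. -/
lemma simple_index_mem (J : Set (Fin n)) {m : Fin n} {μ : List (Fin n)}
    (hJ : ∀ x ∈ μ, x ∈ J) (hπ : π μ = s m) : m ∈ J := by
  obtain ⟨μ', hsub, hπ', hred'⟩ := exists_reduced_sublist cs μ
  have hlen : μ'.length = 1 := by
    have h1 : ℓ (π μ') = μ'.length := hred'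
    rw [hπ, hπ'] at *
    rw [← h1, hπ, cs.length_simple]
  match μ', hlen with
  | [x], _ =>
    have hx : x ∈ J := hJ x (hsub.subset (by simp))
    have : s x = s m := by rw [← cs.wordProd_singleton, hπ', hπ]
    have := simple_injective cs this
    rwa [← this]

/-- Support invariance: if `w` is a product of a `J`-word, then every reduced word
for `w` consists of letters of `J`. -/
lemma support_lemma (J : Set (Fin n)) :
    ∀ N : ℕ, ∀ w : W, ∀ κ ω : List (Fin n), ℓ w = N →
      (∀ x ∈ κ, x ∈ J) → π κ = w → cs.IsReduced ω → π ω = w →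
      ∀ x ∈ ω, x ∈ J := by
  intro N
  induction N using Nat.strong_induction_on with
  | _ N IH =>
  intro w κ ω hN hκJ hκ hred hω
  obtain ⟨κ', hsub', hπ', hred'⟩ := exists_reduced_sublist cs κ
  have hκ'J : ∀ x ∈ κ', x ∈ J := fun x hx => hκJ x (hsub'.subset hx)
  have hκ'w : π κ' = w := by rw [hπ', hκ]
  cases ω with
  | nil => intro x hx; simp at hx
  | cons m α =>
    have hlω : α.length + 1 = ℓ w := by
      have := hred
      unfold CoxeterSystem.IsReduced at this
      rw [hω] at this
      simpa using this.symm
    have hπα : π α = s m * w := by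
      rw [← hω, cs.wordProd_cons, ← mul_assoc, cs.simple_mul_simple_self, one_mul]
    have hlsm : ℓ (s m * w) < ℓ w := by
      have h1 : ℓ (π α) ≤ α.length := cs.length_wordProd_le α
      rw [hπα] at h1
      omega
    obtain ⟨j, hjlt, hje⟩ := strong_exchange_left cs (cs.isReflection_simple m) hlsm
      hred' hκ'w
    have heraseJ : ∀ x ∈ κ'.eraseIdx j, x ∈ J :=
      fun x hx => hκ'J x ((List.eraseIdx_sublist κ' j).subset hx)
    -- α is reduced
    have hlsm' : ℓ (s m * w) = α.length := by
      rcases cs.length_simple_mul w m with h | h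
      · omega
      · omega
    have hredα : cs.IsReduced α := by
      unfold CoxeterSystem.IsReduced
      rw [hπα, hlsm']
    -- letters of α are in J by induction
    have hαJ : ∀ x ∈ α, x ∈ J := by
      refine IH (ℓ (s m * w)) (by omega) (s m * w) (κ'.eraseIdx j) α rfl heraseJ
        hje.symm hredα hπα
    -- m itself is in J
    have hmJ : m ∈ J := by
      have hsm : π (κ'.eraseIdx j ++ κ'.reverse) = s m := by
        rw [cs.wordProd_append, cs.wordProd_reverse, ← hje, hκ'w, mul_assoc,
          mul_inv_cancel, mul_one]
      refine simple_index_mem cs J ?_ hsm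
      intro x hx
      rcases List.mem_append.mp hx with h | h
      · exact heraseJ x h
      · exact hκ'J x (List.mem_reverse.mp h)
    intro x hx
    rcases List.mem_cons.mp hx with rfl | h
    · exact hmJ
    · exact hαJ x h

end StmtAux



/-- The `γ'`-sortable elements of a standard parabolic subgroup `W'` form an order ideal of
`B_γ`: if `w` is `γ`-sortable, `w'` is `γ'`-sortable and `w ≤_B w'`, then `w` lies in `W'`
and is `γ'`-sortable. -/
theorem stmt15 (cs : CoxeterSystem M W) (J : Set (Fin n)) (w w' : W)
    (hw : Sortable cs w) (hw' : SortableIn cs J w') (hle : Bruhat cs w w') :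
    w ∈ Subgroup.closure (cs.simple '' J) ∧ SortableIn cs J w := by
  obtain ⟨A, ⟨hredA, hprodA, hminA⟩, hblocksA⟩ := hw
  obtain ⟨A', ⟨hredA', hprodA', hminA'⟩, hblocksA', hJA'⟩ := hw'
  obtain ⟨l, hredl, hprodl, l', hsubl, hprodl'⟩ := hle
  have hJw' : ∀ x ∈ subwordOf n A', x ∈ J := by
    intro x hx
    obtain ⟨p, hp, rfl⟩ := List.mem_map.mp hx
    exact hJA' p ((Finset.mem_sort _).mp hp)
  have hJl : ∀ x ∈ l, x ∈ J :=
    StmtAux.support_lemma cs J (cs.length w') w' (subwordOf n A') l rfl hJw' hprodA'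
      hredl hprodl
  have hJl' : ∀ x ∈ l', x ∈ J := fun x hx => hJl x (hsubl.subset hx)
  constructor
  · rw [← hprodl']
    unfold CoxeterSystem.wordProd
    apply Subgroup.list_prod_mem
    intro x hx
    obtain ⟨i, hi, rfl⟩ := List.mem_map.mp hx
    exact Subgroup.subset_closure ⟨i, hJl' i hi, rfl⟩
  · refine ⟨A, ⟨hredA, hprodA, hminA⟩, hblocksA, ?_⟩
    intro p hp
    have hx : gammaLetter n p ∈ subwordOf n A :=
      List.mem_map_of_mem ((Finset.mem_sort _).mpr hp)
    exact StmtAux.support_lemma cs J (cs.length w) w l' (subwordOf n A) rfl hJl'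
      hprodl' hredA hprodA _ hx
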